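/- Let γ : ℝ → ℝ³ be a C¹, 2π-periodic curve with γ(t) and γ'(t) linearly independent for every t, which is projectively simple (if s, t ∈ [0, 2π) and γ(s) is a real scalar multiple of γ(t), then s = t) and contains four points in general position (there exist t₁, t₂, t₃, t₄ such that any three of γ(t₁), γ(t₂), γ(t₃), γ(t₄) are linearly independent). Let φ : ℝ → ℝ be C¹ with φ' > 0 and φ(t + 2π) = φ(t) + 2π, and let f : ℝ³ ≃ (ℝ³)* be a linear equivalence such that f(γ(φ(t))) vanishes on γ(t) and γ'(t) for all t. Then the bilinear form F(x,y) := f(x)(y) is symmetric if and only if φ(φ(t)) ≡ t (mod 2π) for all t. -/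

import Mathlib

open Module

/-! ### Auxiliary linear-algebra infrastructure in `ℝ³`. -/

/-- Explicit `3×3` determinant of the rows `v, w, x`. -/
def det3 (v w x : Fin 3 → ℝ) : ℝ :=
  v 0 * (w 1 * x 2 - w 2 * x 1) - v 1 * (w 0 * x 2 - w 2 * x 0) + v 2 * (w 0 * x 1 - w 1 * x 0)

/-- Standard basis vectors of `ℝ³`. -/
def e3 (i : Fin 3) : Fin 3 → ℝ := fun j => if j = i then 1 else 0

/-- `det3 v w ·` as a linear functional. -/
def ell (v w : Fin 3 → ℝ) : Module.Dual ℝ (Fin 3 → ℝ) where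
  toFun x := det3 v w x
  map_add' x y := by simp [det3]; ring
  map_smul' c x := by simp [det3]; ring

@[simp] lemma ell_apply (v w x : Fin 3 → ℝ) : ell v w x = det3 v w x := rfl

lemma det3_self (v w : Fin 3 → ℝ) : det3 v w v = 0 := by simp [det3]; ring

lemma vec_decomp (x : Fin 3 → ℝ) : x = x 0 • e3 0 + x 1 • e3 1 + x 2 • e3 2 := by
  funext j; fin_cases j <;> simp [e3]

lemma bilin_expand (f : (Fin 3 → ℝ) ≃ₗ[ℝ] Module.Dual ℝ (Fin 3 → ℝ)) (x y : Fin 3 → ℝ) :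
    f x y = x 0 * y 0 * f (e3 0) (e3 0) + x 0 * y 1 * f (e3 0) (e3 1) + x 0 * y 2 * f (e3 0) (e3 2)
      + x 1 * y 0 * f (e3 1) (e3 0) + x 1 * y 1 * f (e3 1) (e3 1) + x 1 * y 2 * f (e3 1) (e3 2)
      + x 2 * y 0 * f (e3 2) (e3 0) + x 2 * y 1 * f (e3 2) (e3 1)
      + x 2 * y 2 * f (e3 2) (e3 2) := by
  conv_lhs => rw [vec_decomp x, vec_decomp y]
  simp [map_add, map_smul, smul_eq_mul]
  ring

/-- The vector representing the antisymmetric part of the bilinear form `f x y`. -/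
def vskew (f : (Fin 3 → ℝ) ≃ₗ[ℝ] Module.Dual ℝ (Fin 3 → ℝ)) : Fin 3 → ℝ :=
  ![f (e3 1) (e3 2) - f (e3 2) (e3 1),
    f (e3 2) (e3 0) - f (e3 0) (e3 2),
    f (e3 0) (e3 1) - f (e3 1) (e3 0)]

lemma skew_eq (f : (Fin 3 → ℝ) ≃ₗ[ℝ] Module.Dual ℝ (Fin 3 → ℝ)) (x y : Fin 3 → ℝ) :
    f x y - f y x = det3 (vskew f) x y := by
  rw [bilin_expand f x y, bilin_expand f y x]
  simp [det3, vskew]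
  ring

/-- Three linearly independent vectors span `ℝ³`. -/
lemma span_top_of_li3 (a b c : Fin 3 → ℝ) (h : LinearIndependent ℝ ![a, b, c]) :
    Submodule.span ℝ {a, b, c} = ⊤ := by
  have hr : Set.range ![a, b, c] = {a, b, c} := by
    ext w
    constructor
    · rintro ⟨i, rfl⟩; fin_cases i <;> simp
    · rintro (rfl | rfl | rfl)
      exacts [⟨0, rfl⟩, ⟨1, rfl⟩, ⟨2, rfl⟩]
  apply Submodule.eq_top_of_finrank_eq
  rw [← hr, finrank_span_eq_card h]
  simp [finrank_fin_fun]

/-- Two functionals vanishing on two independent vectors of `ℝ³` are proportional. -/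
lemma prop_of_ann (u₁ u₂ : Fin 3 → ℝ) (hu : LinearIndependent ℝ ![u₁, u₂])
    (g h : Module.Dual ℝ (Fin 3 → ℝ)) (hg : g ≠ 0)
    (hg1 : g u₁ = 0) (hg2 : g u₂ = 0) (hh1 : h u₁ = 0) (hh2 : h u₂ = 0) :
    ∃ c : ℝ, h = c • g := by
  obtain ⟨u₃, hu₃⟩ : ∃ u₃, g u₃ ≠ 0 := by
    by_contra hc; push_neg at hc
    exact hg (LinearMap.ext hc)
  have hind3 : LinearIndependent ℝ ![u₁, u₂, u₃] := by
    rw [Fintype.linearIndependent_iff]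
    intro c hc
    have hsum : c 0 • u₁ + c 1 • u₂ + c 2 • u₃ = 0 := by
      rwa [Fin.sum_univ_three] at hc
    have hc2 : c 2 = 0 := by
      have := congrArg g hsum
      simp [map_add, map_smul, hg1, hg2, smul_eq_mul] at this
      rcases this with h' | h'
      · exact h'
      · exact absurd h' hu₃
    have hsum2 : c 0 • u₁ + c 1 • u₂ = 0 := by
      rw [hc2, zero_smul, add_zero] at hsum; exact hsum
    have h01 := Fintype.linearIndependent_iff.mp hu (![c 0, c 1]) (by rwa [Fin.sum_univ_two])
    intro i; fin_cases i
    · exact h01 0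
    · exact h01 1
    · exact hc2
  have hspan := span_top_of_li3 u₁ u₂ u₃ hind3
  refine ⟨h u₃ / g u₃, ?_⟩
  apply LinearMap.ext_on hspan
  intro w hw
  rcases hw with rfl | rfl | rfl
  · simp [hh1, hg1]
  · simp [hh2, hg2]
  · simp [smul_eq_mul]
    field_simp

/-- If `det3 v w x = 0` for all `x` and `v ≠ 0` then `w` is a multiple of `v`. -/
lemma dep_of_det3_zero (v w : Fin 3 → ℝ) (hv : v ≠ 0) (h : ∀ x, det3 v w x = 0) :
    ∃ c : ℝ, w = c • v := by
  have A0 : v 1 * w 2 = v 2 * w 1 := by have := h (e3 0); simp [det3, e3] at this; linarith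
  have A1 : v 2 * w 0 = v 0 * w 2 := by have := h (e3 1); simp [det3, e3] at this; linarith
  have A2 : v 0 * w 1 = v 1 * w 0 := by have := h (e3 2); simp [det3, e3] at this; linarith
  obtain ⟨i, hi⟩ : ∃ i, v i ≠ 0 := by
    by_contra hc; push_neg at hc; exact hv (funext hc)
  fin_cases i
  · have h0 : v 0 ≠ 0 := hi
    refine ⟨w 0 / v 0, funext fun j => ?_⟩
    fin_cases j
    · show w 0 = w 0 / v 0 * v 0; field_simp
    · show w 1 = w 0 / v 0 * v 1; rw [div_mul_eq_mul_div, eq_div_iff h0]; linarith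
    · show w 2 = w 0 / v 0 * v 2; rw [div_mul_eq_mul_div, eq_div_iff h0]; linarith
  · have h0 : v 1 ≠ 0 := hi
    refine ⟨w 1 / v 1, funext fun j => ?_⟩
    fin_cases j
    · show w 0 = w 1 / v 1 * v 0; rw [div_mul_eq_mul_div, eq_div_iff h0]; linarith
    · show w 1 = w 1 / v 1 * v 1; field_simp
    · show w 2 = w 1 / v 1 * v 2; rw [div_mul_eq_mul_div, eq_div_iff h0]; linarith
  · have h0 : v 2 ≠ 0 := hi
    refine ⟨w 2 / v 2, funext fun j => ?_⟩
    fin_cases j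
    · show w 0 = w 2 / v 2 * v 0; rw [div_mul_eq_mul_div, eq_div_iff h0]; linarith
    · show w 1 = w 2 / v 2 * v 1; rw [div_mul_eq_mul_div, eq_div_iff h0]; linarith
    · show w 2 = w 2 / v 2 * v 2; field_simp

/-- Product rule for the bilinear map `(x, y) ↦ f x y` along two curves whose pairing
vanishes identically. -/
lemma bilin_deriv (f : (Fin 3 → ℝ) ≃ₗ[ℝ] Module.Dual ℝ (Fin 3 → ℝ))
    (a b : ℝ → Fin 3 → ℝ) (a' b' : Fin 3 → ℝ) (t : ℝ)
    (ha : HasDerivAt a a' t) (hb : HasDerivAt b b' t)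
    (h : ∀ s, f (a s) (b s) = 0) :
    f a' (b t) + f (a t) b' = 0 := by
  set B₂ : (Fin 3 → ℝ) →ₗ[ℝ] ((Fin 3 → ℝ) →L[ℝ] ℝ) :=
    (LinearMap.toContinuousLinearMap :
      ((Fin 3 → ℝ) →ₗ[ℝ] ℝ) ≃ₗ[ℝ] ((Fin 3 → ℝ) →L[ℝ] ℝ)).toLinearMap.comp f.toLinearMap
    with hB₂
  set B : (Fin 3 → ℝ) →L[ℝ] ((Fin 3 → ℝ) →L[ℝ] ℝ) := LinearMap.toContinuousLinearMap B₂ with hB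
  have hBapp : ∀ x y, B x y = f x y := by
    intro x y
    simp [hB, hB₂]
  have hc : HasDerivAt (fun s => B (a s)) (B a') t :=
    (B.hasFDerivAt (x := a t)).comp_hasDerivAt t ha
  have hD : HasDerivAt (fun s => B (a s) (b s)) (B a' (b t) + B (a t) b') t := hc.clm_apply hb
  have hzero : HasDerivAt (fun s => B (a s) (b s)) 0 t := by
    have : (fun s => B (a s) (b s)) = fun _ => (0 : ℝ) := by
      funext s; rw [hBapp]; exact h s
    rw [this]; exact hasDerivAt_const t 0
  have := hD.unique hzero
  rw [hBapp, hBapp] at this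
  exact this

/-- Among four indices, if a predicate holds for at most one of them, one can select three
distinct indices where it fails. -/
lemma three_of_four (P : Fin 4 → Prop) (h : ∀ i j, i ≠ j → P i → P j → False) :
    ∃ i j l : Fin 4, i ≠ j ∧ i ≠ l ∧ j ≠ l ∧ ¬P i ∧ ¬P j ∧ ¬P l := by
  by_cases h0 : P 0
  · exact ⟨1, 2, 3, by decide, by decide, by decide,
      fun h1 => h 0 1 (by decide) h0 h1, fun h2 => h 0 2 (by decide) h0 h2,
      fun h3 => h 0 3 (by decide) h0 h3⟩
  by_cases h1 : P 1
  · exact ⟨0, 2, 3, by decide, by decide, by decide, h0,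
      fun h2 => h 1 2 (by decide) h1 h2, fun h3 => h 1 3 (by decide) h1 h3⟩
  by_cases h2 : P 2
  · exact ⟨0, 1, 3, by decide, by decide, by decide, h0, h1,
      fun h3 => h 2 3 (by decide) h2 h3⟩
  · exact ⟨0, 1, 2, by decide, by decide, by decide, h0, h1, h2⟩

/-- For a simple closed self-dual curve, the associated bilinear form `F(x,y) = f(x)(y)`
is symmetric iff the reparametrization `φ` is an involution modulo `2π`. -/
theorem stmt_14 (γ : ℝ → Fin 3 → ℝ) (hγ : ContDiff ℝ 1 γ)
    (hper : ∀ t : ℝ, γ (t + 2 * Real.pi) = γ t)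
    (hind : ∀ t : ℝ, LinearIndependent ℝ ![γ t, deriv γ t])
    (hsimple : ∀ s t : ℝ, s ∈ Set.Ico 0 (2 * Real.pi) → t ∈ Set.Ico 0 (2 * Real.pi) →
      (∃ c : ℝ, γ s = c • γ t) → s = t)
    (hgen : ∃ t : Fin 4 → ℝ, ∀ i j l : Fin 4, i ≠ j → i ≠ l → j ≠ l →
      LinearIndependent ℝ ![γ (t i), γ (t j), γ (t l)])
    (φ : ℝ → ℝ) (hφ : ContDiff ℝ 1 φ) (hφ' : ∀ t, 0 < deriv φ t)
    (hφper : ∀ t : ℝ, φ (t + 2 * Real.pi) = φ t + 2 * Real.pi)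
    (f : (Fin 3 → ℝ) ≃ₗ[ℝ] Module.Dual ℝ (Fin 3 → ℝ))
    (hf : ∀ t : ℝ, f (γ (φ t)) (γ t) = 0 ∧ f (γ (φ t)) (deriv γ t) = 0) :
    (∀ x y : Fin 3 → ℝ, f x y = f y x) ↔
      (∀ t : ℝ, ∃ z : ℤ, φ (φ t) = t + 2 * Real.pi * z) := by
  have hπ : (0 : ℝ) < 2 * Real.pi := by positivity
  -- basic differentiability facts
  have hγd : ∀ s : ℝ, HasDerivAt γ (deriv γ s) s := fun s =>
    ((hγ.differentiable one_ne_zero) s).hasDerivAt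
  have hφd : ∀ s : ℝ, HasDerivAt φ (deriv φ s) s := fun s =>
    ((hφ.differentiable one_ne_zero) s).hasDerivAt
  have hcomp : ∀ s : ℝ, HasDerivAt (fun u => γ (φ u)) (deriv φ s • deriv γ (φ s)) s :=
    fun s => (hγd (φ s)).scomp s (hφd s)
  -- nonvanishing
  have hγne : ∀ s : ℝ, γ s ≠ 0 := fun s => by
    simpa using (hind s).ne_zero 0
  have hfne : ∀ x : Fin 3 → ℝ, x ≠ 0 → f x ≠ 0 := by
    intro x hx h0
    exact hx (by simpa using f.injective (h0.trans (map_zero f).symm))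
  -- integer periodicity
  have hperZ : ∀ (z : ℤ) (s : ℝ), γ (s + 2 * Real.pi * z) = γ s := by
    have hp : Function.Periodic γ (2 * Real.pi) := hper
    intro z s
    have := (hp.int_mul z) s
    rw [show (z : ℝ) * (2 * Real.pi) = 2 * Real.pi * z by ring] at this
    exact this
  -- derivative of `t ↦ f (γ (φ t)) (γ t) = 0` gives `f (γ' (φ t)) (γ t) = 0`
  have hderiv1 : ∀ s : ℝ, f (deriv γ (φ s)) (γ s) = 0 := by
    intro s
    have h0 := bilin_deriv f (fun u => γ (φ u)) γ (deriv φ s • deriv γ (φ s)) (deriv γ s) s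
      (hcomp s) (hγd s) (fun u => (hf u).1)
    rw [(hf s).2] at h0
    simp only [map_smul, LinearMap.smul_apply, smul_eq_mul, add_zero] at h0
    rcases mul_eq_zero.mp h0 with h' | h'
    · exact absurd h' (hφ' s).ne'
    · exact h'
  constructor
  · -- symmetric ⇒ involution
    intro hsym t
    have h1 : f (γ t) (γ (φ t)) = 0 := by rw [hsym]; exact (hf t).1
    have h2 : f (γ t) (deriv γ (φ t)) = 0 := by rw [hsym]; exact hderiv1 t
    obtain ⟨c, hc⟩ := prop_of_ann (γ (φ t)) (deriv γ (φ t)) (hind (φ t))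
      (f (γ t)) (f (γ (φ (φ t)))) (hfne _ (hγne t)) h1 h2 ((hf (φ t)).1) ((hf (φ t)).2)
    have hγc : γ (φ (φ t)) = c • γ t := by
      apply f.injective
      rw [map_smul]; exact hc
    -- reduce both times modulo 2π
    set k1 : ℤ := ⌊φ (φ t) / (2 * Real.pi)⌋ with hk1
    set k2 : ℤ := ⌊t / (2 * Real.pi)⌋ with hk2
    have hb1 : (k1 : ℝ) * (2 * Real.pi) ≤ φ (φ t) ∧ φ (φ t) < ((k1 : ℝ) + 1) * (2 * Real.pi) := by
      constructor
      · have := Int.floor_le (φ (φ t) / (2 * Real.pi))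
        rwa [le_div_iff₀ hπ] at this
      · have := Int.lt_floor_add_one (φ (φ t) / (2 * Real.pi))
        rwa [div_lt_iff₀ hπ] at this
    have hb2 : (k2 : ℝ) * (2 * Real.pi) ≤ t ∧ t < ((k2 : ℝ) + 1) * (2 * Real.pi) := by
      constructor
      · have := Int.floor_le (t / (2 * Real.pi))
        rwa [le_div_iff₀ hπ] at this
      · have := Int.lt_floor_add_one (t / (2 * Real.pi))
        rwa [div_lt_iff₀ hπ] at this
    set r1 : ℝ := φ (φ t) - 2 * Real.pi * k1 with hr1
    set r2 : ℝ := t - 2 * Real.pi * k2 with hr2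
    have hm1 : r1 ∈ Set.Ico 0 (2 * Real.pi) := by
      constructor
      · rw [hr1]; nlinarith [hb1.1]
      · rw [hr1]; nlinarith [hb1.2]
    have hm2 : r2 ∈ Set.Ico 0 (2 * Real.pi) := by
      constructor
      · rw [hr2]; nlinarith [hb2.1]
      · rw [hr2]; nlinarith [hb2.2]
    have hγr1 : γ r1 = γ (φ (φ t)) := by
      have := hperZ k1 r1
      rw [hr1] at this ⊢
      rw [show φ (φ t) - 2 * Real.pi * ↑k1 + 2 * Real.pi * ↑k1 = φ (φ t) by ring] at this
      rw [this]
    have hγr2 : γ r2 = γ t := by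
      have := hperZ k2 r2
      rw [hr2] at this ⊢
      rw [show t - 2 * Real.pi * ↑k2 + 2 * Real.pi * ↑k2 = t by ring] at this
      rw [this]
    have heq : r1 = r2 := by
      apply hsimple r1 r2 hm1 hm2
      exact ⟨c, by rw [hγr1, hγr2, hγc]⟩
    refine ⟨k1 - k2, ?_⟩
    have : φ (φ t) - 2 * Real.pi * k1 = t - 2 * Real.pi * k2 := heq
    push_cast
    linarith
  · -- involution ⇒ symmetric
    intro hinv
    have hkey : ∀ s : ℝ, γ (φ (φ s)) = γ s := by
      intro s
      obtain ⟨z, hz⟩ := hinv s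
      rw [hz]
      exact hperZ z s
    have hd : ∀ s : ℝ, f (γ s) (γ (φ s)) = 0 := fun s => by
      have := (hf (φ s)).1; rwa [hkey s] at this
    have hd' : ∀ s : ℝ, f (γ s) (deriv γ (φ s)) = 0 := fun s => by
      have := (hf (φ s)).2; rwa [hkey s] at this
    have he : ∀ s : ℝ, f (deriv γ s) (γ (φ s)) = 0 := by
      intro s
      have h0 := bilin_deriv f γ (fun u => γ (φ u)) (deriv γ s)
        (deriv φ s • deriv γ (φ s)) s (hγd s) (hcomp s) hd
      rw [map_smul] at h0
      simp only [smul_eq_mul, hd' s, mul_zero, add_zero] at h0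
      exact h0
    suffices hv : vskew f = 0 by
      intro x y
      have hxy := skew_eq f x y
      rw [hv] at hxy
      simp [det3] at hxy
      linarith
    by_contra hv
    obtain ⟨tt, htt⟩ := hgen
    -- at each of the four marked points, either γ(tᵢ) ∥ v or f(γ(tᵢ)) kills v
    have hstep : ∀ i : Fin 4, (∃ c : ℝ, γ (tt i) = c • vskew f) ∨ f (γ (tt i)) (vskew f) = 0 := by
      intro i
      set s := φ (tt i) with hs
      have hγs : γ (φ s) = γ (tt i) := by rw [hs]; exact hkey (tt i)
      have e1 : det3 (vskew f) (γ (tt i)) (γ s) = 0 := by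
        rw [← hγs, ← skew_eq, (hf s).1, hd s]; ring
      have e2 : det3 (vskew f) (γ (tt i)) (deriv γ s) = 0 := by
        rw [← hγs, ← skew_eq, (hf s).2, he s]; ring
      obtain ⟨c, hc⟩ := prop_of_ann (γ s) (deriv γ s) (hind s)
        (f (γ (tt i))) (ell (vskew f) (γ (tt i))) (hfne _ (hγne (tt i)))
        (by rw [← hγs]; exact (hf s).1) (by rw [← hγs]; exact (hf s).2) e1 e2
      by_cases hc0 : c = 0
      · left
        apply dep_of_det3_zero (vskew f) (γ (tt i)) hv
        intro x
        have := congrArg (fun L : Module.Dual ℝ (Fin 3 → ℝ) => L x) hc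
        simp only [ell_apply, hc0, zero_smul, LinearMap.zero_apply] at this
        exact this
      · right
        have := congrArg (fun L : Module.Dual ℝ (Fin 3 → ℝ) => L (vskew f)) hc
        simp only [ell_apply, det3_self, LinearMap.smul_apply, smul_eq_mul] at this
        rcases mul_eq_zero.mp this.symm with h' | h'
        · exact absurd h' hc0
        · exact h'
    -- at most one of the four points can be parallel to v
    have huniq : ∀ i j : Fin 4, i ≠ j → (∃ c : ℝ, γ (tt i) = c • vskew f) →
        (∃ c : ℝ, γ (tt j) = c • vskew f) → False := by
      rintro i j hij ⟨a, ha⟩ ⟨b, hb⟩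
      obtain ⟨l, hl1, hl2⟩ : ∃ l : Fin 4, l ≠ i ∧ l ≠ j := by
        fin_cases i <;> fin_cases j <;> decide
      have li := htt i j l hij (Ne.symm hl1) (Ne.symm hl2)
      have h0 : ∑ k : Fin 3, ![b, -a, 0] k • ![γ (tt i), γ (tt j), γ (tt l)] k = 0 := by
        rw [Fin.sum_univ_three]
        simp only [Matrix.cons_val_zero, Matrix.cons_val_one, Matrix.head_cons,
          Matrix.cons_val_two, Matrix.tail_cons, ha, hb, smul_smul, zero_smul, add_zero]
        rw [← add_smul]
        rw [show b * a + -a * b = 0 by ring, zero_smul]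
      have hall := Fintype.linearIndependent_iff.mp li (![b, -a, 0]) h0
      have ha0 : a = 0 := by
        have := hall 1
        simp at this
        exact this
      rw [ha0, zero_smul] at ha
      exact hγne (tt i) ha
    obtain ⟨i, j, l, hij, hil, hjl, hPi, hPj, hPl⟩ :=
      three_of_four (fun i => ∃ c : ℝ, γ (tt i) = c • vskew f) huniq
    have ki := (hstep i).resolve_left hPi
    have kj := (hstep j).resolve_left hPj
    have kl := (hstep l).resolve_left hPl
    have li := htt i j l hij hil hjl
    have hspan := span_top_of_li3 _ _ _ li
    -- the linear functional `w ↦ f w (vskew f)` vanishes on a spanning set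
    have hflip : (f.toLinearMap.flip (vskew f)) = 0 := by
      apply LinearMap.ext_on hspan
      intro w hw
      rcases hw with rfl | rfl | rfl
      · exact ki
      · exact kj
      · exact kl
    have hall : ∀ w : Fin 3 → ℝ, f w (vskew f) = 0 := by
      intro w
      have := congrArg (fun L : (Fin 3 → ℝ) →ₗ[ℝ] ℝ => L w) hflip
      simpa using this
    apply hv
    funext i0
    have := hall (f.symm (LinearMap.proj i0))
    rw [f.apply_symm_apply] at this
    exact this
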